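/- Let (Ω,P) be a probability space carrying a random variable H with the exponential distribution of rate 1, and two Bernoulli random variables B0 and B1 with success probability p ∈ [0,1], such that H, B0, B1 are mutually independent. Fix γ̄ > 0 (mean SNR), μ > 0 (interference-to-noise ratio) and a water-filling threshold η > 0. Define the fed-back SINR γ_fb = γ̄·H if B0 = 0 and γ_fb = γ̄·H/(1+μ) if B0 = 1, and define the realized per-symbol spectral efficiency R = log₂(γ_fb/η) if γ_fb ≥ η and not (B0 = 0 and B1 = 1), and R = 0 otherwise (the case B0 = 0, B1 = 1 is an outage, and no rate is transmitted when γ_fb < η). Then the average spectral efficiency satisfies E[R] = (1−p)²·∫_η^∞ log₂(γ/η)·(1/γ̄)·e^{−γ/γ̄} dγ + p·∫_η^∞ log₂(γ/η)·((1+μ)/γ̄)·e^{−γ(1+μ)/γ̄} dγ. -/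

import Mathlib

open MeasureTheory ProbabilityTheory Real Set

open scoped NNReal ENNReal


namespace WFAux

/-- the truncated water-filling rate function -/
noncomputable def g (η c x : ℝ) : ℝ := if η ≤ c * x then Real.logb 2 (c * x / η) else 0

lemma g_meas (η c : ℝ) : Measurable (g η c) := by
  unfold g
  apply Measurable.ite
  · exact measurableSet_le measurable_const (measurable_const.mul measurable_id)
  · simp only [Real.logb]
    exact ((Real.measurable_log.comp ((measurable_const.mul measurable_id).div_const η)).div_const _)
  · exact measurable_const

lemma smul_pdf_eq (η c : ℝ) (hη : 0 < η) (hc : 0 < c) :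
    (fun x => exponentialPDFReal 1 x • g η c x)
      = (Ici (η / c)).indicator (fun x => Real.logb 2 (c * x / η) * Real.exp (-x)) := by
  funext x
  by_cases hx : η / c ≤ x
  · have hx0 : 0 ≤ x := le_trans (le_of_lt (div_pos hη hc)) hx
    have hcx : η ≤ c * x := by
      rw [div_le_iff₀ hc] at hx; linarith [hx]
    rw [Set.indicator_of_mem (Set.mem_Ici.mpr hx)]
    unfold g exponentialPDFReal gammaPDFReal
    rw [if_pos hcx, if_pos hx0]
    simp [Real.Gamma_one, smul_eq_mul]
    ring
  · have hcx : ¬ η ≤ c * x := by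
      intro h; exact hx ((div_le_iff₀ hc).mpr (by linarith [h]))
    rw [Set.indicator_of_notMem (by simpa using hx)]
    unfold g
    rw [if_neg hcx, smul_zero]

lemma integrableOn_core (η c : ℝ) (hη : 0 < η) (hc : 0 < c) :
    IntegrableOn (fun x => Real.logb 2 (c * x / η) * Real.exp (-x)) (Ici (η / c)) := by
  have hlog2 : 0 < Real.log 2 := Real.log_pos one_lt_two
  set M : ℝ := c / (η * Real.log 2) with hM
  have hMpos : 0 < M := div_pos hc (mul_pos hη hlog2)
  have hbd : Integrable (fun x => M * (2 * Real.exp (-(1/2 : ℝ) * x)))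
      (volume.restrict (Ici (η / c))) := by
    have : IntegrableOn (fun x => Real.exp (-(1/2 : ℝ) * x)) (Ioi (η / c)) :=
      exp_neg_integrableOn_Ioi _ (by norm_num)
    have h2 : IntegrableOn (fun x => Real.exp (-(1/2 : ℝ) * x)) (Ici (η / c)) := by
      rwa [integrableOn_Ici_iff_integrableOn_Ioi]
    exact (h2.const_mul 2).const_mul M
  apply Integrable.mono' hbd
  · apply Measurable.aestronglyMeasurable
    apply Measurable.mul _ (Real.measurable_exp.comp measurable_neg)
    simp only [Real.logb]
    exact ((Real.measurable_log.comp ((measurable_const.mul measurable_id).div_const η)).div_const _)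
  · rw [ae_restrict_iff' measurableSet_Ici]
    refine Filter.Eventually.of_forall (fun x hx => ?_)
    have hx' : η / c ≤ x := hx
    have hx0 : (0:ℝ) < x := lt_of_lt_of_le (div_pos hη hc) hx'
    have hηcx : η ≤ c * x := by rw [div_le_iff₀ hc] at hx'; linarith
    have h1 : (1:ℝ) ≤ c * x / η := by
      rw [le_div_iff₀ hη, one_mul]; exact hηcx
    have hlogb_nonneg : 0 ≤ Real.logb 2 (c * x / η) := Real.logb_nonneg one_lt_two h1
    have hexp : 0 < Real.exp (-x) := Real.exp_pos _
    have hlogb_le : Real.logb 2 (c * x / η) ≤ M * x := by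
      have hy : 0 < c * x / η := lt_of_lt_of_le one_pos h1
      have : Real.log (c * x / η) ≤ c * x / η := by
        have := Real.log_le_sub_one_of_pos hy; linarith
      rw [Real.logb]
      rw [div_le_iff₀ hlog2]
      calc Real.log (c * x / η) ≤ c * x / η := this
        _ = M * x * Real.log 2 := by
            rw [hM]; field_simp
    have hxe : x * Real.exp (-x) ≤ 2 * Real.exp (-(1/2:ℝ) * x) := by
      have h := Real.add_one_le_exp (x/2)
      have hx2 : x ≤ 2 * Real.exp (x/2) := by nlinarith
      calc x * Real.exp (-x) ≤ (2 * Real.exp (x/2)) * Real.exp (-x) :=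
            mul_le_mul_of_nonneg_right hx2 hexp.le
        _ = 2 * Real.exp (-(1/2:ℝ) * x) := by
            rw [mul_assoc, ← Real.exp_add]; ring_nf
    rw [Real.norm_eq_abs, abs_of_nonneg (mul_nonneg hlogb_nonneg hexp.le)]
    calc Real.logb 2 (c * x / η) * Real.exp (-x) ≤ (M * x) * Real.exp (-x) :=
          mul_le_mul_of_nonneg_right hlogb_le hexp.le
      _ = M * (x * Real.exp (-x)) := by ring
      _ ≤ M * (2 * Real.exp (-(1/2:ℝ) * x)) :=
          mul_le_mul_of_nonneg_left hxe hMpos.le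

lemma expMeasure_eq (r : ℝ) :
    expMeasure r = volume.withDensity (fun x => ((exponentialPDFReal r x).toNNReal : ENNReal)) := by
  rfl

lemma g_integrable (η c : ℝ) (hη : 0 < η) (hc : 0 < c) :
    Integrable (g η c) (expMeasure 1) := by
  rw [expMeasure_eq]
  rw [MeasureTheory.integrable_withDensity_iff_integrable_smul
    (measurable_exponentialPDFReal 1).real_toNNReal]
  have : (fun x => ((exponentialPDFReal 1 x).toNNReal : ℝ≥0) • g η c x)
      = (Ici (η / c)).indicator (fun x => Real.logb 2 (c * x / η) * Real.exp (-x)) := by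
    rw [← smul_pdf_eq η c hη hc]
    funext x
    simp only [NNReal.smul_def, smul_eq_mul,
      Real.coe_toNNReal _ (exponentialPDFReal_nonneg zero_lt_one x)]
  rw [this]
  exact (integrableOn_core η c hη hc).integrable_indicator measurableSet_Ici

lemma subst_lemma (η c : ℝ) (hη : 0 < η) (hc : 0 < c) :
    ∫ x in Ioi (η / c), Real.logb 2 (c * x / η) * Real.exp (-x)
      = ∫ γ in Ioi η, Real.logb 2 (γ / η) * ((1 / c) * Real.exp (-γ / c)) := by
  have key := MeasureTheory.integral_comp_mul_left_Ioi
      (fun γ => Real.logb 2 (γ / η) * ((1 / c) * Real.exp (-γ / c))) (η / c) hc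
  have hca : c * (η / c) = η := by field_simp
  rw [hca] at key
  have hfun : (fun x => Real.logb 2 (c * x / η) * ((1 / c) * Real.exp (-(c * x) / c)))
      = (fun x => (1/c) * (Real.logb 2 (c * x / η) * Real.exp (-x))) := by
    funext x
    have hcx : -(c * x) / c = -x := by field_simp [mul_comm]
    rw [hcx]; ring
  rw [hfun] at key
  rw [MeasureTheory.integral_const_mul] at key
  have hc' : (1:ℝ)/c ≠ 0 := by positivity
  rw [smul_eq_mul, ← one_div] at key
  exact mul_left_cancel₀ hc' key

lemma g_integral (η c : ℝ) (hη : 0 < η) (hc : 0 < c) :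
    ∫ x, g η c x ∂(expMeasure 1)
      = ∫ γ in Ioi η, Real.logb 2 (γ / η) * ((1 / c) * Real.exp (-γ / c)) := by
  rw [expMeasure_eq]
  rw [integral_withDensity_eq_integral_smul
    (measurable_exponentialPDFReal 1).real_toNNReal]
  have : (fun x => ((exponentialPDFReal 1 x).toNNReal : ℝ≥0) • g η c x)
      = (Ici (η / c)).indicator (fun x => Real.logb 2 (c * x / η) * Real.exp (-x)) := by
    rw [← smul_pdf_eq η c hη hc]
    funext x
    simp only [NNReal.smul_def, smul_eq_mul,
      Real.coe_toNNReal _ (exponentialPDFReal_nonneg zero_lt_one x)]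
  rw [this, MeasureTheory.integral_indicator measurableSet_Ici,
    MeasureTheory.integral_Ici_eq_integral_Ioi, subst_lemma η c hη hc]

end WFAux

/-- Theorem 1 of the paper: with unit-rate exponential channel power `H`, Bernoulli(`p`)
interference indicators `B0` (first symbol of the coherence interval, used for feedback) and
`B1` (transmitted symbol), all mutually independent, fed-back SINR
`γ_fb = γ̄H` if `B0 = 0` and `γ̄H/(1+μ)` if `B0 = 1`, and realized rate
`R = log₂(γ_fb/η)` when `γ_fb ≥ η` and not (`B0 = 0` and `B1 = 1`) (outage), else `0`,
the average spectral efficiency of conventional water-filling is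
`(1−p)²∫_η^∞ log₂(γ/η) f_n(γ) dγ + p ∫_η^∞ log₂(γ/η) f_i(γ) dγ`. -/
theorem conventional_wf_average_spectral_efficiency
    {Ω : Type*} [MeasurableSpace Ω] (Pr : Measure Ω) [IsProbabilityMeasure Pr]
    (H B0 B1 : Ω → ℝ) (hHm : Measurable H) (hB0m : Measurable B0) (hB1m : Measurable B1)
    (hH : Measure.map H Pr = ProbabilityTheory.expMeasure 1)
    (p : ℝ) (hp0 : 0 ≤ p) (hp1 : p ≤ 1)
    (hB0 : ∀ ω, B0 ω = 0 ∨ B0 ω = 1) (hB1 : ∀ ω, B1 ω = 0 ∨ B1 ω = 1)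
    (hB0p : Pr {ω | B0 ω = 1} = ENNReal.ofReal p)
    (hB1p : Pr {ω | B1 ω = 1} = ENNReal.ofReal p)
    (hindep : iIndepFun ![H, B0, B1] Pr)
    (γbar μ η : ℝ) (hγbar : 0 < γbar) (hμ : 0 < μ) (hη : 0 < η)
    (γfb : Ω → ℝ)
    (hγfb : ∀ ω, γfb ω = if B0 ω = 0 then γbar * H ω else γbar * H ω / (1 + μ))
    (R : Ω → ℝ)
    (hR : ∀ ω, R ω =
      if η ≤ γfb ω ∧ ¬(B0 ω = 0 ∧ B1 ω = 1) then Real.logb 2 (γfb ω / η) else 0) :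
    ∫ ω, R ω ∂Pr
      = (1 - p) ^ 2 *
          (∫ γ in Ioi η, Real.logb 2 (γ / η) * ((1 / γbar) * Real.exp (-γ / γbar)))
        + p *
          (∫ γ in Ioi η,
            Real.logb 2 (γ / η) * (((1 + μ) / γbar) * Real.exp (-(γ * (1 + μ)) / γbar))) := by
  classical
  have hμ1 : (0:ℝ) < 1 + μ := by linarith
  set c2 : ℝ := γbar / (1 + μ) with hc2def
  have hc2 : 0 < c2 := div_pos hγbar hμ1
  set φ0 : ℝ → ℝ := fun x => if x = 0 then 1 else 0 with hφ0def
  set φ1 : ℝ → ℝ := fun x => if x = 1 then 1 else 0 with hφ1def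
  have hφ0m : Measurable φ0 := by
    apply Measurable.ite _ measurable_const measurable_const
    exact measurableSet_eq
  have hφ1m : Measurable φ1 := by
    apply Measurable.ite _ measurable_const measurable_const
    exact measurableSet_eq
  have hgnm : Measurable (WFAux.g η γbar) := WFAux.g_meas η γbar
  have hgim : Measurable (WFAux.g η c2) := WFAux.g_meas η c2
  have hfmeas : ∀ i, Measurable (![H, B0, B1] i) := by
    intro i; fin_cases i <;> simpa using ‹_›
  -- decomposition of R
  have hRdecomp : ∀ ω, R ω
      = φ0 (B0 ω) * φ0 (B1 ω) * WFAux.g η γbar (H ω) + φ1 (B0 ω) * WFAux.g η c2 (H ω) := by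
    intro ω
    have hkey : γbar * H ω / (1 + μ) = c2 * H ω := by
      rw [hc2def, mul_div_right_comm]
    rcases hB0 ω with h0 | h0 <;> rcases hB1 ω with h1 | h1 <;>
      simp [hR, hγfb, h0, h1, hkey, WFAux.g, hφ0def, hφ1def]
  -- integrability
  have hint_n : Integrable (fun ω => WFAux.g η γbar (H ω)) Pr := by
    have hmi : Integrable (WFAux.g η γbar) (Measure.map H Pr) := by
      rw [hH]; exact WFAux.g_integrable η γbar hη hγbar
    exact (integrable_map_measure hgnm.aestronglyMeasurable hHm.aemeasurable).mp hmi
  have hint_i : Integrable (fun ω => WFAux.g η c2 (H ω)) Pr := by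
    have hmi : Integrable (WFAux.g η c2) (Measure.map H Pr) := by
      rw [hH]; exact WFAux.g_integrable η c2 hη hc2
    exact (integrable_map_measure hgim.aestronglyMeasurable hHm.aemeasurable).mp hmi
  have hφ0b : ∀ x, |φ0 x| ≤ 1 := by
    intro x; rw [hφ0def]; dsimp only; split_ifs <;> norm_num
  have hφ1b : ∀ x, |φ1 x| ≤ 1 := by
    intro x; rw [hφ1def]; dsimp only; split_ifs <;> norm_num
  have hT1m : AEStronglyMeasurable
      (fun ω => φ0 (B0 ω) * φ0 (B1 ω) * WFAux.g η γbar (H ω)) Pr :=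
    (((hφ0m.comp hB0m).mul (hφ0m.comp hB1m)).mul (hgnm.comp hHm)).aestronglyMeasurable
  have hT2m : AEStronglyMeasurable (fun ω => φ1 (B0 ω) * WFAux.g η c2 (H ω)) Pr :=
    ((hφ1m.comp hB0m).mul (hgim.comp hHm)).aestronglyMeasurable
  have hT1int : Integrable (fun ω => φ0 (B0 ω) * φ0 (B1 ω) * WFAux.g η γbar (H ω)) Pr := by
    apply Integrable.mono' hint_n.abs hT1m
    refine Filter.Eventually.of_forall (fun ω => ?_)
    rw [Real.norm_eq_abs, abs_mul, abs_mul]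
    have h1 := hφ0b (B0 ω); have h2 := hφ0b (B1 ω)
    have h3 := abs_nonneg (WFAux.g η γbar (H ω))
    have h5 := abs_nonneg (φ0 (B1 ω))
    have hab : |φ0 (B0 ω)| * |φ0 (B1 ω)| ≤ 1 := mul_le_one₀ h1 h5 h2
    calc |φ0 (B0 ω)| * |φ0 (B1 ω)| * |WFAux.g η γbar (H ω)|
        ≤ 1 * |WFAux.g η γbar (H ω)| := mul_le_mul_of_nonneg_right hab h3
      _ = |WFAux.g η γbar (H ω)| := one_mul _
  have hT2int : Integrable (fun ω => φ1 (B0 ω) * WFAux.g η c2 (H ω)) Pr := by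
    apply Integrable.mono' hint_i.abs hT2m
    refine Filter.Eventually.of_forall (fun ω => ?_)
    rw [Real.norm_eq_abs, abs_mul]
    have h1 := hφ1b (B0 ω)
    have h3 := abs_nonneg (WFAux.g η c2 (H ω))
    calc |φ1 (B0 ω)| * |WFAux.g η c2 (H ω)|
        ≤ 1 * |WFAux.g η c2 (H ω)| := mul_le_mul_of_nonneg_right h1 h3
      _ = |WFAux.g η c2 (H ω)| := one_mul _
  -- expectation of indicators
  have hEφ0B0 : ∫ ω, φ0 (B0 ω) ∂Pr = 1 - p := by
    have heq : (fun ω => φ0 (B0 ω)) = Set.indicator {ω | B0 ω = 0} (fun _ => (1:ℝ)) := by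
      funext ω; by_cases h : B0 ω = 0 <;> simp [hφ0def, h]
    have hms : MeasurableSet {ω | B0 ω = 0} := hB0m (measurableSet_singleton 0)
    rw [heq]
    rw [show Set.indicator {ω | B0 ω = 0} (fun _ => (1:ℝ)) = Set.indicator {ω | B0 ω = 0} 1 from rfl]
    rw [integral_indicator_one hms]
    have hcompl : {ω | B0 ω = 0} = {ω | B0 ω = 1}ᶜ := by
      ext ω
      simp only [Set.mem_setOf_eq, Set.mem_compl_iff]
      constructor
      · intro h h'; rw [h'] at h; exact one_ne_zero h
      · intro h; rcases hB0 ω with h0 | h0; exact h0; exact absurd h0 h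
    have hms1 : MeasurableSet {ω | B0 ω = 1} := hB0m (measurableSet_singleton 1)
    rw [hcompl, measureReal_def, measure_compl hms1 (measure_ne_top Pr _),
      measure_univ, hB0p, ← ENNReal.ofReal_one, ← ENNReal.ofReal_sub 1 hp0,
      ENNReal.toReal_ofReal (by linarith)]
  have hEφ0B1 : ∫ ω, φ0 (B1 ω) ∂Pr = 1 - p := by
    have heq : (fun ω => φ0 (B1 ω)) = Set.indicator {ω | B1 ω = 0} (fun _ => (1:ℝ)) := by
      funext ω; by_cases h : B1 ω = 0 <;> simp [hφ0def, h]
    have hms : MeasurableSet {ω | B1 ω = 0} := hB1m (measurableSet_singleton 0)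
    rw [heq]
    rw [show Set.indicator {ω | B1 ω = 0} (fun _ => (1:ℝ)) = Set.indicator {ω | B1 ω = 0} 1 from rfl]
    rw [integral_indicator_one hms]
    have hcompl : {ω | B1 ω = 0} = {ω | B1 ω = 1}ᶜ := by
      ext ω
      simp only [Set.mem_setOf_eq, Set.mem_compl_iff]
      constructor
      · intro h h'; rw [h'] at h; exact one_ne_zero h
      · intro h; rcases hB1 ω with h0 | h0; exact h0; exact absurd h0 h
    have hms1 : MeasurableSet {ω | B1 ω = 1} := hB1m (measurableSet_singleton 1)
    rw [hcompl, measureReal_def, measure_compl hms1 (measure_ne_top Pr _),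
      measure_univ, hB1p, ← ENNReal.ofReal_one, ← ENNReal.ofReal_sub 1 hp0,
      ENNReal.toReal_ofReal (by linarith)]
  have hEφ1B0 : ∫ ω, φ1 (B0 ω) ∂Pr = p := by
    have heq : (fun ω => φ1 (B0 ω)) = Set.indicator {ω | B0 ω = 1} (fun _ => (1:ℝ)) := by
      funext ω; by_cases h : B0 ω = 1 <;> simp [hφ1def, h]
    have hms : MeasurableSet {ω | B0 ω = 1} := hB0m (measurableSet_singleton 1)
    rw [heq]
    rw [show Set.indicator {ω | B0 ω = 1} (fun _ => (1:ℝ)) = Set.indicator {ω | B0 ω = 1} 1 from rfl]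
    rw [integral_indicator_one hms, measureReal_def, hB0p, ENNReal.toReal_ofReal hp0]
  -- expectations of g ∘ H
  have hEgn : ∫ ω, WFAux.g η γbar (H ω) ∂Pr
      = ∫ γ in Ioi η, Real.logb 2 (γ / η) * ((1 / γbar) * Real.exp (-γ / γbar)) := by
    rw [← integral_map hHm.aemeasurable hgnm.aestronglyMeasurable, hH]
    exact WFAux.g_integral η γbar hη hγbar
  have hEgi : ∫ ω, WFAux.g η c2 (H ω) ∂Pr
      = ∫ γ in Ioi η,
          Real.logb 2 (γ / η) * (((1 + μ) / γbar) * Real.exp (-(γ * (1 + μ)) / γbar)) := by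
    rw [← integral_map hHm.aemeasurable hgim.aestronglyMeasurable, hH]
    rw [WFAux.g_integral η c2 hη hc2]
    apply integral_congr_ae
    refine Filter.Eventually.of_forall (fun γ => ?_)
    have h1 : (1:ℝ)/c2 = (1 + μ)/γbar := by rw [hc2def, one_div_div]
    have h2 : -γ/c2 = -(γ * (1 + μ))/γbar := by
      rw [hc2def, div_div_eq_mul_div, neg_mul]
    dsimp only
    rw [h1, h2]
  -- independence
  have hindB0B1 : IndepFun (fun ω => (B0 ω, B1 ω)) H Pr := by
    have := hindep.indepFun_prodMk hfmeas 1 2 0 (by decide) (by decide)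
    simpa using this
  have hfac1 : ∫ ω, φ0 (B0 ω) * φ0 (B1 ω) * WFAux.g η γbar (H ω) ∂Pr
      = (∫ ω, φ0 (B0 ω) * φ0 (B1 ω) ∂Pr) * ∫ ω, WFAux.g η γbar (H ω) ∂Pr := by
    have hi : IndepFun (fun ω => φ0 (B0 ω) * φ0 (B1 ω)) (fun ω => WFAux.g η γbar (H ω)) Pr := by
      exact hindB0B1.comp ((hφ0m.comp measurable_fst).mul (hφ0m.comp measurable_snd)) hgnm
    exact hi.integral_fun_mul_eq_mul_integral ((hφ0m.comp hB0m).mul (hφ0m.comp hB1m)).aestronglyMeasurable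
      (hgnm.comp hHm).aestronglyMeasurable
  have hindB0B1' : IndepFun B0 B1 Pr := by
    have := hindep.indepFun (i := 1) (j := 2) (by decide)
    simpa using this
  have hfac1' : ∫ ω, φ0 (B0 ω) * φ0 (B1 ω) ∂Pr
      = (∫ ω, φ0 (B0 ω) ∂Pr) * ∫ ω, φ0 (B1 ω) ∂Pr := by
    exact (hindB0B1'.comp hφ0m hφ0m).integral_fun_mul_eq_mul_integral
      (hφ0m.comp hB0m).aestronglyMeasurable (hφ0m.comp hB1m).aestronglyMeasurable
  have hindB0H : IndepFun B0 H Pr := by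
    have := hindep.indepFun (i := 1) (j := 0) (by decide)
    simpa using this
  have hfac2 : ∫ ω, φ1 (B0 ω) * WFAux.g η c2 (H ω) ∂Pr
      = (∫ ω, φ1 (B0 ω) ∂Pr) * ∫ ω, WFAux.g η c2 (H ω) ∂Pr := by
    exact (hindB0H.comp hφ1m hgim).integral_fun_mul_eq_mul_integral
      (hφ1m.comp hB0m).aestronglyMeasurable (hgim.comp hHm).aestronglyMeasurable
  -- put it together
  calc ∫ ω, R ω ∂Pr
      = ∫ ω, (φ0 (B0 ω) * φ0 (B1 ω) * WFAux.g η γbar (H ω)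
          + φ1 (B0 ω) * WFAux.g η c2 (H ω)) ∂Pr := by
        apply integral_congr_ae
        exact Filter.Eventually.of_forall hRdecomp
    _ = (∫ ω, φ0 (B0 ω) * φ0 (B1 ω) * WFAux.g η γbar (H ω) ∂Pr)
          + ∫ ω, φ1 (B0 ω) * WFAux.g η c2 (H ω) ∂Pr := integral_add hT1int hT2int
    _ = ((1 - p) * (1 - p)) *
          (∫ γ in Ioi η, Real.logb 2 (γ / η) * ((1 / γbar) * Real.exp (-γ / γbar)))
        + p * (∫ γ in Ioi η,
            Real.logb 2 (γ / η) * (((1 + μ) / γbar) * Real.exp (-(γ * (1 + μ)) / γbar))) := by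
        rw [hfac1, hfac1', hfac2, hEφ0B0, hEφ0B1, hEφ1B0, hEgn, hEgi]
    _ = _ := by ring
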